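/- arXiv:1804.02514 — 2 statements merged into one kernel-verified Lean document; each statement's English description precedes it below -/
import Mathlib

section
/- If G is a stem Lie superalgebra (i.e., Z(G) ⊆ [G,G]), then the Lie superalgebra of central derivations SDer_z(G) is abelian. -/
/-- A Lie superalgebra: a `ZMod 2`-graded vector space with a bilinear bracket that
respects the grading, is super skew-symmetric and satisfies the super Jacobi identity. -/
structure LieSuperAlg (K : Type*) [Field K] (L : Type*) [AddCommGroup L] [Module K L] where
  br : L →ₗ[K] L →ₗ[K] L
  grading : ZMod 2 → Submodule K L
  internal : DirectSum.IsInternal grading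
  br_grade : ∀ (i j : ZMod 2), ∀ x ∈ grading i, ∀ y ∈ grading j, br x y ∈ grading (i + j)
  skew : ∀ (i j : ZMod 2), ∀ x ∈ grading i, ∀ y ∈ grading j,
    br x y = -(((-1 : K) ^ (i.val * j.val)) • br y x)
  jacobi : ∀ (i j : ZMod 2), ∀ x ∈ grading i, ∀ y ∈ grading j, ∀ z : L,
    br x (br y z) = br (br x y) z + ((-1 : K) ^ (i.val * j.val)) • br y (br x z)

variable {K : Type*} [Field K] {L : Type*} {M : Type*} [AddCommGroup L] [Module K L]
  [AddCommGroup M] [Module K M]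

/-- The center `Z(G)`. -/
def LieSuperAlg.center (S : LieSuperAlg K L) : Submodule K L where
  carrier := {x | ∀ g : L, S.br g x = 0}
  add_mem' := by intro a b ha hb g; rw [map_add, ha g, hb g, add_zero]
  zero_mem' := by intro g; simp
  smul_mem' := by intro c a ha g; rw [map_smul, ha g, smul_zero]

/-- The derived subalgebra `G¹ = [G,G]`. -/
def LieSuperAlg.derived (S : LieSuperAlg K L) : Submodule K L :=
  Submodule.span K {z | ∃ x y : L, S.br x y = z}

/-- The lower central series `G⁰ = G`, `Gⁿ⁺¹ = [Gⁿ, G]`. -/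
def LieSuperAlg.lcs (S : LieSuperAlg K L) : ℕ → Submodule K L
  | 0 => ⊤
  | n + 1 => Submodule.span K {z | ∃ x ∈ S.lcs n, ∃ y : L, S.br x y = z}

/-- A superderivation of degree `α`. -/
def LieSuperAlg.IsSuperDer (S : LieSuperAlg K L) (α : ZMod 2) (T : L →ₗ[K] L) : Prop :=
  (∀ (i : ZMod 2), ∀ x ∈ S.grading i, T x ∈ S.grading (i + α)) ∧
  (∀ (i : ZMod 2), ∀ x ∈ S.grading i, ∀ y : L,
    T (S.br x y) = S.br (T x) y + ((-1 : K) ^ (α.val * i.val)) • S.br x (T y))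

/-- A central derivation: a superderivation with image in the center. -/
def LieSuperAlg.IsCentralDer (S : LieSuperAlg K L) (α : ZMod 2) (T : L →ₗ[K] L) : Prop :=
  S.IsSuperDer α T ∧ ∀ x : L, T x ∈ S.center

/-- The superbracket of two (homogeneous, of degrees `α`, `β`) linear endomorphisms. -/
def sbr (α β : ZMod 2) (T₁ T₂ : L →ₗ[K] L) : L →ₗ[K] L :=
  T₁ ∘ₗ T₂ - ((-1 : K) ^ (α.val * β.val)) • (T₂ ∘ₗ T₁)

lemma br_mem_derived (S : LieSuperAlg K L) (x y : L) : S.br x y ∈ S.derived :=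
  Submodule.subset_span ⟨x, y, rfl⟩

/-- An isoclinism `(φ, θ)` between two Lie superalgebras. -/
structure Isoclinism (SG : LieSuperAlg K L) (SH : LieSuperAlg K M) where
  φ : (L ⧸ SG.center) ≃ₗ[K] (M ⧸ SH.center)
  θ : SG.derived ≃ₗ[K] SH.derived
  φ_grade : ∀ (i : ZMod 2), ∀ x ∈ SG.grading i, ∃ h ∈ SH.grading i,
    φ (Submodule.Quotient.mk x) = Submodule.Quotient.mk h
  θ_grade : ∀ (i : ZMod 2), ∀ (x : L) (hx : x ∈ SG.derived), x ∈ SG.grading i →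
    (θ ⟨x, hx⟩ : M) ∈ SH.grading i
  compat : ∀ (x y : L) (h k : M),
    φ (Submodule.Quotient.mk x) = Submodule.Quotient.mk h →
    φ (Submodule.Quotient.mk y) = Submodule.Quotient.mk k →
    (θ ⟨SG.br x y, br_mem_derived SG x y⟩ : M) = SH.br h k

lemma LieSuperAlg.decomp (S : LieSuperAlg K L) (x : L) :
    ∃ x0 ∈ S.grading 0, ∃ x1 ∈ S.grading 1, x = x0 + x1 := by
  have htop : (⨆ i, S.grading i) = ⊤ := S.internal.submodule_iSup_eq_top
  have hsup : (⨆ i, S.grading i) = S.grading 0 ⊔ S.grading 1 := by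
    refine le_antisymm (iSup_le fun i => ?_) (sup_le (le_iSup _ 0) (le_iSup _ 1))
    fin_cases i
    · exact le_sup_left
    · exact le_sup_right
  have hx : x ∈ S.grading 0 ⊔ S.grading 1 := by
    rw [← hsup, htop]; trivial
  obtain ⟨a, ha, b, hb, hab⟩ := Submodule.mem_sup.mp hx
  exact ⟨a, ha, b, hb, hab.symm⟩

lemma LieSuperAlg.disjoint_grading (S : LieSuperAlg K L) {i j : ZMod 2} (hij : i ≠ j)
    {a : L} (hi : a ∈ S.grading i) (hj : a ∈ S.grading j) : a = 0 := by
  have hind := S.internal.submodule_iSupIndep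
  have := hind.pairwiseDisjoint hij
  exact (Submodule.disjoint_def.mp this) a hi hj

lemma LieSuperAlg.center_br_right (S : LieSuperAlg K L) {z : L} (hz : z ∈ S.center)
    (g : L) : S.br z g = 0 := by
  have hzg : ∀ j : ZMod 2, ∀ gj ∈ S.grading j, S.br z gj = 0 := by
    intro j gj hgj
    obtain ⟨z0, hz0, z1, hz1, rfl⟩ := S.decomp z
    -- S.br gj (z0 + z1) = 0, with components in distinct gradings
    have h0 : S.br gj z0 + S.br gj z1 = 0 := by
      have := hz gj
      rwa [map_add] at this
    have hm0 : S.br gj z0 ∈ S.grading (j + 0) := S.br_grade j 0 gj hgj z0 hz0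
    have hm1 : S.br gj z1 ∈ S.grading (j + 1) := S.br_grade j 1 gj hgj z1 hz1
    have hne : (j + 0 : ZMod 2) ≠ j + 1 := by
      intro h
      have : (0 : ZMod 2) = 1 := by exact add_left_cancel h
      exact zero_ne_one this
    have e0 : S.br gj z0 = 0 := by
      have : S.br gj z0 = -(S.br gj z1) := eq_neg_of_add_eq_zero_left h0
      have hmem : S.br gj z0 ∈ S.grading (j + 1) := by
        rw [this]; exact Submodule.neg_mem _ hm1
      exact S.disjoint_grading hne hm0 hmem
    have e1 : S.br gj z1 = 0 := by
      have : S.br gj z1 = -(S.br gj z0) := eq_neg_of_add_eq_zero_right h0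
      have hmem : S.br gj z1 ∈ S.grading (j + 0) := by
        rw [this]; exact Submodule.neg_mem _ hm0
      exact S.disjoint_grading (Ne.symm hne) hm1 hmem
    have s0 : S.br z0 gj = 0 := by
      rw [S.skew 0 j z0 hz0 gj hgj, e0, smul_zero, neg_zero]
    have s1 : S.br z1 gj = 0 := by
      rw [S.skew 1 j z1 hz1 gj hgj, e1, smul_zero, neg_zero]
    rw [map_add, LinearMap.add_apply, s0, s1, add_zero]
  obtain ⟨g0, hg0, g1, hg1, rfl⟩ := S.decomp g
  rw [map_add, hzg 0 g0 hg0, hzg 1 g1 hg1, add_zero]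

lemma LieSuperAlg.central_der_vanish (S : LieSuperAlg K L) {α : ZMod 2} {T : L →ₗ[K] L}
    (hT : S.IsCentralDer α T) : ∀ w ∈ S.derived, T w = 0 := by
  intro w hw
  induction hw using Submodule.span_induction with
  | mem z hz =>
    obtain ⟨x, y, rfl⟩ := hz
    have key : ∀ i : ZMod 2, ∀ xi ∈ S.grading i, T (S.br xi y) = 0 := by
      intro i xi hxi
      rw [hT.1.2 i xi hxi y, S.center_br_right (hT.2 xi) y, hT.2 y xi,
        smul_zero, add_zero]
    obtain ⟨x0, hx0, x1, hx1, rfl⟩ := S.decomp x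
    rw [map_add, LinearMap.add_apply, map_add, key 0 x0 hx0, key 1 x1 hx1, add_zero]
  | zero => exact map_zero T
  | add a b _ _ ha hb => rw [map_add, ha, hb, add_zero]
  | smul c a _ ha => rw [map_smul, ha, smul_zero]

/-- If `G` is a stem Lie superalgebra then `SDer_z(G)` is abelian. -/
theorem stmt0 (S : LieSuperAlg K L) (hstem : S.center ≤ S.derived) :
    ∀ (α β : ZMod 2) (T₁ T₂ : L →ₗ[K] L), S.IsCentralDer α T₁ → S.IsCentralDer β T₂ →
      sbr α β T₁ T₂ = 0 := by
  intro α β T₁ T₂ h₁ h₂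
  ext x
  have e12 : T₁ (T₂ x) = 0 := S.central_der_vanish h₁ _ (hstem (h₂.2 x))
  have e21 : T₂ (T₁ x) = 0 := S.central_der_vanish h₂ _ (hstem (h₁.2 x))
  simp [sbr, e12, e21]
end

section
/- Let H be a nilpotent Lie superalgebra of nilindex 2. Then SDer_z(H) is abelian if and only if H¹ = Z(H). -/
variable {K : Type*} [Field K] {L : Type*} {M : Type*} [AddCommGroup L] [Module K L]
  [AddCommGroup M] [Module K M]

/-! Auxiliary lemmas -/

section Aux

variable {K : Type*} [Field K] {M : Type*} [AddCommGroup M] [Module K M]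

namespace LieSuperAlg

variable (S : LieSuperAlg K M)

lemma zmod2_cases (i : ZMod 2) : i = 0 ∨ i = 1 := by revert i; decide

lemma zmod2_cases' (i γ : ZMod 2) : i = γ ∨ i = γ + 1 := by revert i γ; decide

lemma zmod2_add (γ μ : ZMod 2) : γ + (μ + γ) = μ := by revert γ μ; decide

lemma sup_grading : S.grading 0 ⊔ S.grading 1 = ⊤ := by
  have h := S.internal.submodule_iSup_eq_top
  rw [← h]
  refine le_antisymm (sup_le (le_iSup _ 0) (le_iSup _ 1)) (iSup_le fun i => ?_)
  rcases zmod2_cases i with h | h <;> subst h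
  · exact le_sup_left
  · exact le_sup_right

lemma disjoint_grading_s14 : Disjoint (S.grading 0) (S.grading 1) := by
  have h := S.internal.submodule_iSupIndep 0
  refine h.mono_right ?_
  exact le_iSup₂ (f := fun (j : ZMod 2) (_ : j ≠ 0) => S.grading j) 1 (by decide)

lemma isCompl_grading : IsCompl (S.grading 0) (S.grading 1) :=
  ⟨S.disjoint_grading_s14, codisjoint_iff.mpr S.sup_grading⟩

noncomputable def pr0 : M →ₗ[K] M :=
  (S.grading 0).subtype ∘ₗ (S.grading 0).linearProjOfIsCompl (S.grading 1) S.isCompl_grading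

noncomputable def pr1 : M →ₗ[K] M :=
  (S.grading 1).subtype ∘ₗ (S.grading 1).linearProjOfIsCompl (S.grading 0) S.isCompl_grading.symm

lemma pr0_mem (x : M) : S.pr0 x ∈ S.grading 0 := ((S.grading 0).linearProjOfIsCompl _ _ x).2

lemma pr1_mem (x : M) : S.pr1 x ∈ S.grading 1 := ((S.grading 1).linearProjOfIsCompl _ _ x).2

lemma pr0_left {x : M} (hx : x ∈ S.grading 0) : S.pr0 x = x :=
  congrArg Subtype.val (Submodule.linearProjOfIsCompl_apply_left S.isCompl_grading ⟨x, hx⟩)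

lemma pr0_right {x : M} (hx : x ∈ S.grading 1) : S.pr0 x = 0 :=
  congrArg Subtype.val (Submodule.linearProjOfIsCompl_apply_right' S.isCompl_grading hx)

lemma pr1_left {x : M} (hx : x ∈ S.grading 1) : S.pr1 x = x :=
  congrArg Subtype.val (Submodule.linearProjOfIsCompl_apply_left S.isCompl_grading.symm ⟨x, hx⟩)

lemma pr1_right {x : M} (hx : x ∈ S.grading 0) : S.pr1 x = 0 :=
  congrArg Subtype.val (Submodule.linearProjOfIsCompl_apply_right' S.isCompl_grading.symm hx)

lemma pr_add (x : M) : S.pr0 x + S.pr1 x = x := by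
  have hx : x ∈ S.grading 0 ⊔ S.grading 1 := S.sup_grading ▸ Submodule.mem_top
  obtain ⟨a, ha, b, hb, rfl⟩ := Submodule.mem_sup.mp hx
  rw [map_add, map_add, S.pr0_left ha, S.pr0_right hb, S.pr1_left hb, S.pr1_right ha]
  abel

lemma decomp_s14 (x : M) : ∃ a ∈ S.grading 0, ∃ b ∈ S.grading 1, x = a + b :=
  ⟨S.pr0 x, S.pr0_mem x, S.pr1 x, S.pr1_mem x, (S.pr_add x).symm⟩

/-- left multiplication by a homogeneous central element is zero -/
lemma br_central_left {c : M} {j : ZMod 2} (hc : c ∈ S.grading j)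
    (h : ∀ x : M, S.br x c = 0) (y : M) : S.br c y = 0 := by
  obtain ⟨a, ha, b, hb, rfl⟩ := S.decomp_s14 y
  rw [map_add, S.skew j 0 c hc a ha, S.skew j 1 c hc b hb, h a, h b]
  simp

/-- right multiplication by a homogeneous element that is a left-annihilator is zero -/
lemma br_left_ann {d : M} {j : ZMod 2} (hd : d ∈ S.grading j)
    (h : ∀ x : M, S.br d x = 0) (y : M) : S.br y d = 0 := by
  obtain ⟨a, ha, b, hb, rfl⟩ := S.decomp_s14 y
  rw [map_add, LinearMap.add_apply, S.skew 0 j a ha d hd, S.skew 1 j b hb d hd, h a, h b]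
  simp

lemma derived_le_lcs1 : S.derived ≤ S.lcs 1 := by
  refine Submodule.span_le.mpr fun z hz => ?_
  obtain ⟨x, y, rfl⟩ := hz
  exact Submodule.subset_span ⟨x, Submodule.mem_top, y, rfl⟩

lemma derived_br_eq_zero (h2 : S.lcs 2 = ⊥) {d : M} (hd : d ∈ S.derived) (g : M) :
    S.br d g = 0 := by
  have : S.br d g ∈ S.lcs 2 := Submodule.subset_span ⟨d, S.derived_le_lcs1 hd, g, rfl⟩
  rw [h2] at this
  simpa using this

lemma derived_le_center (h2 : S.lcs 2 = ⊥) : S.derived ≤ S.center := by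
  refine Submodule.span_le.mpr fun z hz => ?_
  obtain ⟨x, y, rfl⟩ := hz
  intro g
  obtain ⟨a, ha, b, hb, rfl⟩ := S.decomp_s14 x
  obtain ⟨c, hc, d, hd, rfl⟩ := S.decomp_s14 y
  have key : ∀ (i j : ZMod 2) (u : M), u ∈ S.grading i → ∀ v : M, v ∈ S.grading j →
      S.br g (S.br u v) = 0 := by
    intro i j u hu v hv
    exact S.br_left_ann (S.br_grade i j u hu v hv)
      (fun x => S.derived_br_eq_zero h2 (br_mem_derived S u v) x) g
  simp only [map_add, LinearMap.add_apply]
  rw [key 0 0 a ha c hc, key 0 1 a ha d hd, key 1 0 b hb c hc, key 1 1 b hb d hd]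
  simp

lemma pr0_derived {x : M} (hx : x ∈ S.derived) : S.pr0 x ∈ S.derived := by
  revert x
  suffices h : S.derived ≤ Submodule.comap S.pr0 S.derived by
    intro x hx; exact h hx
  refine Submodule.span_le.mpr fun z hz => ?_
  obtain ⟨x, y, rfl⟩ := hz
  obtain ⟨a, ha, b, hb, rfl⟩ := S.decomp_s14 x
  obtain ⟨c, hc, d, hd, rfl⟩ := S.decomp_s14 y
  simp only [SetLike.mem_coe, Submodule.mem_comap, map_add, LinearMap.add_apply]
  have h00 : S.pr0 (S.br a c) = S.br a c :=
    S.pr0_left (by simpa using S.br_grade 0 0 a ha c hc)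
  have h01 : S.pr0 (S.br a d) = 0 := S.pr0_right (by simpa using S.br_grade 0 1 a ha d hd)
  have h10 : S.pr0 (S.br b c) = 0 := S.pr0_right (by simpa using S.br_grade 1 0 b hb c hc)
  have h11 : S.pr0 (S.br b d) = S.br b d :=
    S.pr0_left (by simpa [show (1 + 1 : ZMod 2) = 0 from rfl] using S.br_grade 1 1 b hb d hd)
  simp only [map_add, h00, h01, h10, h11, add_zero, zero_add]
  exact Submodule.add_mem _ (br_mem_derived S a c) (br_mem_derived S b d)

lemma pr1_derived {x : M} (hx : x ∈ S.derived) : S.pr1 x ∈ S.derived := by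
  revert x
  suffices h : S.derived ≤ Submodule.comap S.pr1 S.derived by
    intro x hx; exact h hx
  refine Submodule.span_le.mpr fun z hz => ?_
  obtain ⟨x, y, rfl⟩ := hz
  obtain ⟨a, ha, b, hb, rfl⟩ := S.decomp_s14 x
  obtain ⟨c, hc, d, hd, rfl⟩ := S.decomp_s14 y
  simp only [SetLike.mem_coe, Submodule.mem_comap, map_add, LinearMap.add_apply]
  have h00 : S.pr1 (S.br a c) = 0 := S.pr1_right (by simpa using S.br_grade 0 0 a ha c hc)
  have h01 : S.pr1 (S.br a d) = S.br a d :=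
    S.pr1_left (by simpa using S.br_grade 0 1 a ha d hd)
  have h10 : S.pr1 (S.br b c) = S.br b c :=
    S.pr1_left (by simpa using S.br_grade 1 0 b hb c hc)
  have h11 : S.pr1 (S.br b d) = 0 := S.pr1_right (by simpa [show (1 + 1 : ZMod 2) = 0 from rfl] using S.br_grade 1 1 b hb d hd)
  simp only [map_add, h00, h01, h10, h11, add_zero, zero_add]
  exact Submodule.add_mem _ (br_mem_derived S b c) (br_mem_derived S a d)

lemma uniq_add {i : ZMod 2} {a b : M} (ha : a ∈ S.grading i) (hb : b ∈ S.grading (i + 1))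
    (h : a + b = 0) : a = 0 ∧ b = 0 := by
  have key : ∀ u v : M, u ∈ S.grading 0 → v ∈ S.grading 1 → u + v = 0 → u = 0 ∧ v = 0 := by
    intro u v hu hv huv
    have hu1 : u ∈ S.grading 1 := by
      have : u = -v := eq_neg_of_add_eq_zero_left huv
      rw [this]; exact Submodule.neg_mem _ hv
    have hu0 : u = 0 := (Submodule.disjoint_def.mp S.disjoint_grading_s14) u hu hu1
    exact ⟨hu0, by rw [hu0, zero_add] at huv; exact huv⟩
  rcases zmod2_cases i with rfl | rfl
  · exact key a b ha (by simpa using hb) h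
  · have := key b a (by simpa [show (1 + 1 : ZMod 2) = 0 from rfl] using hb) ha (by rw [add_comm]; exact h)
    exact ⟨this.2, this.1⟩

lemma pr0_center {x : M} (hx : x ∈ S.center) : S.pr0 x ∈ S.center ∧ S.pr1 x ∈ S.center := by
  have key : ∀ (i : ZMod 2) (g : M), g ∈ S.grading i →
      S.br g (S.pr0 x) = 0 ∧ S.br g (S.pr1 x) = 0 := by
    intro i g hg
    have h1 : S.br g (S.pr0 x) ∈ S.grading i := by
      simpa using S.br_grade i 0 g hg _ (S.pr0_mem x)
    have h2 : S.br g (S.pr1 x) ∈ S.grading (i + 1) := S.br_grade i 1 g hg _ (S.pr1_mem x)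
    have hsum : S.br g (S.pr0 x) + S.br g (S.pr1 x) = 0 := by
      rw [← map_add, S.pr_add x]; exact hx g
    exact S.uniq_add h1 h2 hsum
  constructor <;> intro g <;>
    obtain ⟨a, ha, b, hb, rfl⟩ := S.decomp_s14 g
  · rw [map_add, LinearMap.add_apply, (key 0 a ha).1, (key 1 b hb).1, add_zero]
  · rw [map_add, LinearMap.add_apply, (key 0 a ha).2, (key 1 b hb).2, add_zero]

lemma exists_functional {N : Submodule K M} {z : M} (hz : z ∉ N) :
    ∃ f : M →ₗ[K] K, f z = 1 ∧ ∀ n ∈ N, f n = 0 := by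
  have hq : (N.mkQ z : M ⧸ N) ≠ 0 := by
    simpa [Submodule.Quotient.mk_eq_zero] using hz
  have := (Module.forall_dual_apply_eq_zero_iff K (N.mkQ z)).not.mpr hq
  push_neg at this
  obtain ⟨φ, hφ⟩ := this
  refine ⟨(φ (N.mkQ z))⁻¹ • (φ ∘ₗ N.mkQ), ?_, ?_⟩
  · simp only [LinearMap.smul_apply, LinearMap.comp_apply, smul_eq_mul]
    exact inv_mul_cancel₀ hφ
  · intro n hn
    simp only [LinearMap.smul_apply, LinearMap.comp_apply, smul_eq_mul]
    have : N.mkQ n = 0 := by simpa [Submodule.Quotient.mk_eq_zero] using hn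
    rw [this, map_zero, mul_zero]

/-- construction of a central derivation from a functional and a central vector -/
lemma mk_central_der (f : M →ₗ[K] K) (γ : ZMod 2)
    (hf_d : ∀ n ∈ S.derived, f n = 0) (hf_g : ∀ u ∈ S.grading (γ + 1), f u = 0)
    {v : M} {μ : ZMod 2} (hv : v ∈ S.grading μ) (hvc : ∀ x : M, S.br x v = 0) :
    S.IsCentralDer (μ + γ) (f.smulRight v) := by
  refine ⟨⟨?_, ?_⟩, ?_⟩
  · intro i x hx
    rcases zmod2_cases' i γ with h | h
    · rw [h, zmod2_add γ μ]
      exact Submodule.smul_mem _ _ hv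
    · rw [LinearMap.smulRight_apply, hf_g x (h ▸ hx), zero_smul]
      exact Submodule.zero_mem _
  · intro i x hx y
    rw [LinearMap.smulRight_apply, LinearMap.smulRight_apply, LinearMap.smulRight_apply,
      hf_d _ (br_mem_derived S x y), zero_smul, map_smul, LinearMap.smul_apply, map_smul,
      S.br_central_left hv hvc y, hvc x]
    simp
  · intro x g
    rw [LinearMap.smulRight_apply, map_smul, hvc g, smul_zero]

end LieSuperAlg

end Aux

/-- For nilpotent `H` of nilindex 2, `SDer_z(H)` is abelian iff `H¹ = Z(H)`. -/
theorem stmt14 (SH : LieSuperAlg K M) (h2 : SH.lcs 2 = ⊥) (h1 : SH.derived ≠ ⊥) :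
    (∀ (α β : ZMod 2) (T₁ T₂ : M →ₗ[K] M), SH.IsCentralDer α T₁ → SH.IsCentralDer β T₂ →
      sbr α β T₁ T₂ = 0) ↔ SH.derived = SH.center := by
  have hle := SH.derived_le_center h2
  constructor
  · intro hab
    by_contra hne
    -- a homogeneous central element `z` not in the derived algebra
    obtain ⟨x, hxc, hxd⟩ : ∃ x ∈ SH.center, x ∉ SH.derived := by
      by_contra h
      push_neg at h
      exact hne (le_antisymm hle h)
    have hx0 := SH.pr0_center hxc
    obtain ⟨γ, z, hzg, hzc, hzd⟩ :
        ∃ (γ : ZMod 2) (z : M), z ∈ SH.grading γ ∧ z ∈ SH.center ∧ z ∉ SH.derived := by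
      by_cases h0 : SH.pr0 x ∈ SH.derived
      · refine ⟨1, SH.pr1 x, SH.pr1_mem x, hx0.2, fun h1' => hxd ?_⟩
        rw [← SH.pr_add x]; exact Submodule.add_mem _ h0 h1'
      · exact ⟨0, SH.pr0 x, SH.pr0_mem x, hx0.1, h0⟩
    -- a homogeneous nonzero element `w` of the derived algebra
    obtain ⟨x', hx'd, hx'0⟩ := Submodule.exists_mem_ne_zero_of_ne_bot h1
    obtain ⟨δ, w, hwg, hwd, hw0⟩ :
        ∃ (δ : ZMod 2) (w : M), w ∈ SH.grading δ ∧ w ∈ SH.derived ∧ w ≠ 0 := by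
      by_cases h0 : SH.pr0 x' = 0
      · refine ⟨1, SH.pr1 x', SH.pr1_mem x', SH.pr1_derived hx'd, fun h1' => hx'0 ?_⟩
        rw [← SH.pr_add x', h0, h1', add_zero]
      · exact ⟨0, SH.pr0 x', SH.pr0_mem x', SH.pr0_derived hx'd, h0⟩
    -- the functional
    have hzN : z ∉ SH.derived ⊔ SH.grading (γ + 1) := by
      intro hmem
      obtain ⟨d, hd, u, hu, hzdu⟩ := Submodule.mem_sup.mp hmem
      rcases LieSuperAlg.zmod2_cases γ with rfl | rfl
      · apply hzd
        have hu' : u ∈ SH.grading 1 := by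
          have h01 : (0 + 1 : ZMod 2) = 1 := by decide
          rwa [h01] at hu
        have heq : SH.pr0 z = SH.pr0 d + SH.pr0 u := by rw [← hzdu, map_add]
        rw [SH.pr0_left hzg, SH.pr0_right hu', add_zero] at heq
        rw [heq]
        exact SH.pr0_derived hd
      · apply hzd
        have hu' : u ∈ SH.grading 0 := by
          have h11 : (1 + 1 : ZMod 2) = 0 := by decide
          rwa [h11] at hu
        have heq : SH.pr1 z = SH.pr1 d + SH.pr1 u := by rw [← hzdu, map_add]
        rw [SH.pr1_left hzg, SH.pr1_right hu', add_zero] at heq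
        rw [heq]
        exact SH.pr1_derived hd
    obtain ⟨f, hfz, hfN⟩ := LieSuperAlg.exists_functional hzN
    have hf_d : ∀ n ∈ SH.derived, f n = 0 := fun n hn => hfN n (Submodule.mem_sup_left hn)
    have hf_g : ∀ u ∈ SH.grading (γ + 1), f u = 0 := fun u hu =>
      hfN u (Submodule.mem_sup_right hu)
    -- the two central derivations
    have hT₁ := SH.mk_central_der f γ hf_d hf_g hwg (hle hwd)
    have hT₂ := SH.mk_central_der f γ hf_d hf_g hzg hzc
    have h := hab _ _ _ _ hT₁ hT₂
    have hzero := congrFun (congrArg DFunLike.coe h) z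
    rw [sbr] at hzero
    simp only [LinearMap.sub_apply, LinearMap.comp_apply, LinearMap.smul_apply,
      LinearMap.smulRight_apply, LinearMap.zero_apply, hfz, one_smul,
      hf_d w hwd, zero_smul, smul_zero, sub_zero] at hzero
    exact hw0 hzero
  · intro heq α β T₁ T₂ h₁ h₂
    -- any central derivation kills the derived subalgebra
    have hker : ∀ (ν : ZMod 2) (T : M →ₗ[K] M), SH.IsCentralDer ν T →
        ∀ d ∈ SH.derived, T d = 0 := by
      intro ν T hT d hd
      have : SH.derived ≤ LinearMap.ker T := by
        refine Submodule.span_le.mpr fun z hz => ?_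
        obtain ⟨x, y, rfl⟩ := hz
        obtain ⟨a, ha, b, hb, rfl⟩ := SH.decomp_s14 x
        have key : ∀ (i : ZMod 2) (u : M), u ∈ SH.grading i → T (SH.br u y) = 0 := by
          intro i u hu
          rw [hT.1.2 i u hu y]
          have hc : ∀ g : M, SH.br g (T u) = 0 := hT.2 u
          have hcy : ∀ g : M, SH.br g (T y) = 0 := hT.2 y
          rw [SH.br_central_left (hT.1.1 i u hu) hc y, hcy u, smul_zero, add_zero]
        simp only [SetLike.mem_coe, LinearMap.mem_ker, map_add, LinearMap.add_apply]
        rw [key 0 a ha, key 1 b hb, add_zero]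
      exact LinearMap.mem_ker.mp (this hd)
    ext x
    have hx₂ : T₂ x ∈ SH.derived := heq ▸ (h₂.2 x)
    have hx₁ : T₁ x ∈ SH.derived := heq ▸ (h₁.2 x)
    rw [sbr]
    simp only [LinearMap.sub_apply, LinearMap.comp_apply, LinearMap.smul_apply,
      LinearMap.zero_apply, hker α T₁ h₁ _ hx₂, hker β T₂ h₂ _ hx₁, smul_zero, sub_zero]
end
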